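/- Let G be a finite simple graph containing a cycle of even length. Then there exist two orientations of G whose skew-adjacency matrices have different characteristic polynomials. -/

import Mathlib

open Matrix

/-- `S` is the skew-adjacency matrix of an orientation of the simple graph `G`. -/
def IsOrientationMatrix {n : ℕ} (G : SimpleGraph (Fin n)) (S : Matrix (Fin n) (Fin n) ℝ) :
    Prop :=
  (∀ i j, G.Adj i j → (S i j = 1 ∧ S j i = -1) ∨ (S i j = -1 ∧ S j i = 1)) ∧
  (∀ i j, ¬G.Adj i j → S i j = 0)

namespace Stmt15

open Polynomial Finset Equiv

variable {n ℓ : ℕ}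

/-- the cycle-context bundle -/
structure Ctx (n ℓ : ℕ) (G : SimpleGraph (Fin n)) (f : ZMod ℓ → Fin n) : Prop where
  inj : Function.Injective f
  adj : ∀ i, G.Adj (f i) (f (i + 1))
  one : (1 : ZMod ℓ) ≠ 0
  two : (2 : ZMod ℓ) ≠ 0

def Ep (f : ZMod ℓ → Fin n) (r c : Fin n) : Prop :=
  (r = f 0 ∧ c = f 1) ∨ (r = f 1 ∧ c = f 0)

def Cp (f : ZMod ℓ → Fin n) (r c : Fin n) : Prop :=
  (∃ k, r = f k ∧ c = f (k + 1)) ∨ (∃ k, c = f k ∧ r = f (k + 1))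

lemma Ep_symm {f : ZMod ℓ → Fin n} {r c : Fin n} (h : Ep f r c) : Ep f c r := by
  rcases h with ⟨h1, h2⟩ | ⟨h1, h2⟩
  exacts [Or.inr ⟨h2, h1⟩, Or.inl ⟨h2, h1⟩]

lemma Cp_symm {f : ZMod ℓ → Fin n} {r c : Fin n} (h : Cp f r c) : Cp f c r := h.symm

noncomputable def bval (b : Bool) : ℝ := if b then 1 else -1

lemma bval_not (b : Bool) : bval (!b) = -bval b := by cases b <;> simp [bval]

lemma bval_one_or (b : Bool) : bval b = 1 ∨ bval b = -1 := by cases b <;> simp [bval]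

open scoped Classical in
noncomputable def Mmat (G : SimpleGraph (Fin n)) (f : ZMod ℓ → Fin n) (t : ℝ)
    (g : Fin n → Fin n → Bool) : Matrix (Fin n) (Fin n) ℝ := fun r c =>
  if r = f 0 ∧ c = f 1 then t
  else if r = f 1 ∧ c = f 0 then -t
  else if ∃ k, r = f k ∧ c = f (k + 1) then 1
  else if ∃ k, c = f k ∧ r = f (k + 1) then -1
  else if G.Adj r c then (if r < c then bval (g r c) else -bval (g c r))
  else 0

variable {G : SimpleGraph (Fin n)} {f : ZMod ℓ → Fin n} {t : ℝ} {g : Fin n → Fin n → Bool}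

lemma Mmat_e01 : Mmat G f t g (f 0) (f 1) = t := by
  unfold Mmat; rw [if_pos ⟨rfl, rfl⟩]

lemma Mmat_e10 (hc : Ctx n ℓ G f) : Mmat G f t g (f 1) (f 0) = -t := by
  unfold Mmat
  rw [if_neg, if_pos ⟨rfl, rfl⟩]
  rintro ⟨h1, -⟩
  exact (hc.adj 0).ne (by rw [← h1]; norm_num)

lemma Mmat_fwd (hc : Ctx n ℓ G f) (k : ZMod ℓ) (hk : k ≠ 0) :
    Mmat G f t g (f k) (f (k + 1)) = 1 := by
  unfold Mmat
  rw [if_neg, if_neg, if_pos ⟨k, rfl, rfl⟩]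
  · rintro ⟨a1, a2⟩
    have e1 : k = 1 := hc.inj a1
    have e2 : k + 1 = 0 := hc.inj a2
    exact hc.two (by linear_combination e2 - e1)
  · rintro ⟨a1, -⟩
    exact hk (hc.inj a1)

lemma Mmat_bwd (hc : Ctx n ℓ G f) (k : ZMod ℓ) (hk : k ≠ 0) :
    Mmat G f t g (f (k + 1)) (f k) = -1 := by
  unfold Mmat
  rw [if_neg, if_neg, if_neg, if_pos ⟨k, rfl, rfl⟩]
  · rintro ⟨m, a1, a2⟩
    have e1 : k + 1 = m := hc.inj a1
    have e2 : k = m + 1 := hc.inj a2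
    exact hc.two (by linear_combination e1 - e2)
  · rintro ⟨-, a2⟩
    exact hk (hc.inj a2)
  · rintro ⟨a1, a2⟩
    have e1 : k + 1 = 0 := hc.inj a1
    have e2 : k = 1 := hc.inj a2
    exact hc.two (by linear_combination e1 - e2)

lemma Mmat_free (hc : Ctx n ℓ G f) {r c : Fin n} (h5 : G.Adj r c) (hEp : ¬ Ep f r c)
    (hCp : ¬ Cp f r c) :
    Mmat G f t g r c = if r < c then bval (g r c) else -bval (g c r) := by
  unfold Mmat
  rw [if_neg (fun h => hEp (Or.inl h)), if_neg (fun h => hEp (Or.inr h)),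
    if_neg (fun h => hCp (Or.inl h)), if_neg (fun h => hCp (Or.inr h)), if_pos h5]

lemma Mmat_zero (hc : Ctx n ℓ G f) {r c : Fin n} (h : ¬ G.Adj r c) : Mmat G f t g r c = 0 := by
  unfold Mmat
  rw [if_neg, if_neg, if_neg, if_neg, if_neg h]
  · rintro ⟨k, a1, a2⟩; rw [a1, a2] at h; exact h (hc.adj k).symm
  · rintro ⟨k, a1, a2⟩; rw [a1, a2] at h; exact h (hc.adj k)
  · rintro ⟨a1, a2⟩; rw [a1, a2] at h
    exact h (by simpa using (hc.adj 0).symm)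
  · rintro ⟨a1, a2⟩; rw [a1, a2] at h
    exact h (by simpa using hc.adj 0)

lemma Mmat_diag (hc : Ctx n ℓ G f) (r : Fin n) : Mmat G f t g r r = 0 :=
  Mmat_zero hc (G.irrefl)

lemma Mmat_t_indep {t' : ℝ} {r c : Fin n} (h1 : ¬(r = f 0 ∧ c = f 1))
    (h2 : ¬(r = f 1 ∧ c = f 0)) : Mmat G f t g r c = Mmat G f t' g r c := by
  unfold Mmat
  rw [if_neg h1, if_neg h2, if_neg h1, if_neg h2]


section Flip

def flipF (p q : Fin n) (g : Fin n → Fin n → Bool) : Fin n → Fin n → Bool := fun x y =>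
  if x = p ∧ y = q then !(g x y) else g x y

lemma flipF_invol (p q : Fin n) : Function.Involutive (flipF p q) := by
  intro g; funext x y; unfold flipF
  by_cases h : x = p ∧ y = q
  · simp [h]
  · simp [h]

lemma flipF_at {p q : Fin n} (g : Fin n → Fin n → Bool) : flipF p q g p q = !(g p q) := by
  unfold flipF; rw [if_pos ⟨rfl, rfl⟩]

lemma flipF_ne {p q x y : Fin n} (g : Fin n → Fin n → Bool) (h : ¬(x = p ∧ y = q)) :
    flipF p q g x y = g x y := by
  unfold flipF; rw [if_neg h]

lemma Mmat_flip_indep {p q r c : Fin n} (h1 : ¬(r = p ∧ c = q)) (h2 : ¬(c = p ∧ r = q)) :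
    Mmat G f t (flipF p q g) r c = Mmat G f t g r c := by
  unfold Mmat
  rw [flipF_ne g h1, flipF_ne g h2]

lemma Mmat_flip_at (hc : Ctx n ℓ G f) {p q : Fin n} (hpq : p < q) (hadjpq : G.Adj p q)
    (hEp : ¬ Ep f p q) (hCp : ¬ Cp f p q) :
    Mmat G f t (flipF p q g) p q = - Mmat G f t g p q := by
  rw [Mmat_free hc hadjpq hEp hCp, Mmat_free hc hadjpq hEp hCp, if_pos hpq, if_pos hpq,
    flipF_at, bval_not]

lemma Mmat_flip_at' (hc : Ctx n ℓ G f) {p q : Fin n} (hpq : p < q) (hadjpq : G.Adj p q)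
    (hEp : ¬ Ep f p q) (hCp : ¬ Cp f p q) :
    Mmat G f t (flipF p q g) q p = - Mmat G f t g q p := by
  rw [Mmat_free hc hadjpq.symm (fun h => hEp (Ep_symm h)) (fun h => hCp (Cp_symm h)),
    Mmat_free hc hadjpq.symm (fun h => hEp (Ep_symm h)) (fun h => hCp (Cp_symm h)),
    if_neg (by exact fun h => absurd hpq (asymm h)), if_neg (by exact fun h => absurd hpq (asymm h)),
    flipF_at, bval_not]

end Flip

noncomputable def Aval (G : SimpleGraph (Fin n)) (f : ZMod ℓ → Fin n) (t : ℝ)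
    (g : Fin n → Fin n → Bool) (π : Equiv.Perm (Fin n)) : ℝ :=
  ∏ i ∈ π.support, (-(Mmat G f t g (π i) i))

lemma charpoly_coeff (M : Matrix (Fin n) (Fin n) ℝ) (hdiag : ∀ i, M i i = 0) (hl : ℓ ≤ n)
    (hl0 : ℓ ≠ 0) :
    M.charpoly.coeff (n - ℓ) =
      ∑ π : Equiv.Perm (Fin n), if π.support.card = ℓ then
          Equiv.Perm.sign π • ∏ i ∈ π.support, (-(M (π i) i)) else 0 := by
  have hch : M.charpoly = (Matrix.charmatrix M).det := rfl
  rw [hch, Matrix.det_apply, Polynomial.finset_sum_coeff]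
  refine Finset.sum_congr rfl (fun π _ => ?_)
  rw [Polynomial.coeff_smul]
  have hprod : (∏ i, M.charmatrix (π i) i)
      = C (∏ i ∈ π.support, (-(M (π i) i))) * X ^ (n - π.support.card) := by
    rw [← Finset.prod_mul_prod_compl π.support]
    congr 1
    · rw [map_prod]
      refine Finset.prod_congr rfl (fun i hi => ?_)
      rw [Matrix.charmatrix_apply_ne _ _ _ (Equiv.Perm.mem_support.mp hi), map_neg]
    · have : ∀ i ∈ π.supportᶜ, M.charmatrix (π i) i = X := by
        intro i hi
        have hfix : π i = i := Equiv.Perm.notMem_support.mp (Finset.mem_compl.mp hi)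
        rw [hfix, Matrix.charmatrix_apply_eq, hdiag, map_zero, sub_zero]
      rw [Finset.prod_congr rfl this, Finset.prod_const, Finset.card_compl, Fintype.card_fin]
  rw [hprod, Polynomial.coeff_C_mul, Polynomial.coeff_X_pow]
  have hsc : π.support.card ≤ n := by
    have := Finset.card_le_univ π.support
    rwa [Fintype.card_fin] at this
  by_cases h : π.support.card = ℓ
  · rw [if_pos h, if_pos (by omega), mul_one]
  · rw [if_neg h, if_neg (by omega), mul_zero, smul_zero]


section Perms

variable [NeZero ℓ]

noncomputable def cup (f : ZMod ℓ → Fin n) (hf : Function.Injective f) : Equiv.Perm (Fin n) :=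
  (Equiv.addRight (1 : ZMod ℓ)).viaEmbedding ⟨f, hf⟩

noncomputable def cdown (f : ZMod ℓ → Fin n) (hf : Function.Injective f) : Equiv.Perm (Fin n) :=
  (Equiv.addRight (-1 : ZMod ℓ)).viaEmbedding ⟨f, hf⟩

lemma supp_viaEmbedding {f : ZMod ℓ → Fin n} (hf : Function.Injective f)
    (e : Equiv.Perm (ZMod ℓ)) (he : ∀ k, e k ≠ k) :
    (e.viaEmbedding ⟨f, hf⟩).support = Finset.univ.image f := by
  ext x
  rw [Equiv.Perm.mem_support]
  constructor
  · intro hx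
    by_contra hxi
    have hxr : x ∉ Set.range f := by
      rintro ⟨k, rfl⟩
      exact hxi (Finset.mem_image.mpr ⟨k, Finset.mem_univ k, rfl⟩)
    exact hx (Equiv.Perm.viaEmbedding_apply_of_notMem e ⟨f, hf⟩ x hxr)
  · intro hx
    obtain ⟨k, -, rfl⟩ := Finset.mem_image.mp hx
    have := Equiv.Perm.viaEmbedding_apply e ⟨f, hf⟩ k
    rw [show ((⟨f, hf⟩ : ZMod ℓ ↪ Fin n) k) = f k from rfl] at this
    rw [this]
    intro hcon
    exact he k (hf hcon)

lemma card_supp_viaEmbedding {f : ZMod ℓ → Fin n} (hf : Function.Injective f)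
    (e : Equiv.Perm (ZMod ℓ)) (he : ∀ k, e k ≠ k) :
    (e.viaEmbedding ⟨f, hf⟩).support.card = ℓ := by
  rw [supp_viaEmbedding hf e he, Finset.card_image_of_injective _ hf, Finset.card_univ, ZMod.card]

lemma addRight_one_ne (k : ZMod ℓ) (h1 : (1 : ZMod ℓ) ≠ 0) : (Equiv.addRight (1 : ZMod ℓ)) k ≠ k := by
  rw [Equiv.coe_addRight]
  intro h
  exact h1 (by linear_combination h)

lemma addRight_negone_ne (k : ZMod ℓ) (h1 : (1 : ZMod ℓ) ≠ 0) :
    (Equiv.addRight (-1 : ZMod ℓ)) k ≠ k := by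
  rw [Equiv.coe_addRight]
  intro h
  exact h1 (by linear_combination -h)

lemma perm_eq_viaEmbedding {f : ZMod ℓ → Fin n} (hf : Function.Injective f)
    (e : Equiv.Perm (ZMod ℓ)) (he : ∀ k, e k ≠ k) (π : Equiv.Perm (Fin n))
    (hs : π.support.card = ℓ) (hchain : ∀ k, π (f k) = f (e k)) :
    π = e.viaEmbedding ⟨f, hf⟩ := by
  have himg : Finset.univ.image f ⊆ π.support := by
    intro x hx
    obtain ⟨k, -, rfl⟩ := Finset.mem_image.mp hx
    rw [Equiv.Perm.mem_support, hchain]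
    exact fun h => he k (hf h)
  have hcard : (Finset.univ.image f).card = ℓ := by
    rw [Finset.card_image_of_injective _ hf, Finset.card_univ, ZMod.card]
  have hsupp : π.support = Finset.univ.image f :=
    (Finset.eq_of_subset_of_card_le himg (by rw [hs, hcard])).symm
  apply Equiv.ext
  intro x
  by_cases hx : x ∈ Set.range f
  · obtain ⟨k, rfl⟩ := hx
    rw [hchain]
    exact (Equiv.Perm.viaEmbedding_apply e ⟨f, hf⟩ k).symm
  · rw [Equiv.Perm.viaEmbedding_apply_of_notMem e ⟨f, hf⟩ x hx]
    by_contra hne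
    have hmem : x ∈ π.support := Equiv.Perm.mem_support.mpr hne
    rw [hsupp] at hmem
    obtain ⟨k, -, hk⟩ := Finset.mem_image.mp hmem
    exact hx ⟨k, hk⟩

variable {G : SimpleGraph (Fin n)} {f : ZMod ℓ → Fin n} {t : ℝ} {g : Fin n → Fin n → Bool}

lemma Aval_cup (hc : Ctx n ℓ G f) (hev : Even ℓ) :
    Aval G f t g (cup f hc.inj) = t := by
  unfold Aval cup
  rw [supp_viaEmbedding hc.inj _ (fun k => addRight_one_ne k hc.one)]
  rw [Finset.prod_image (fun a _ b _ h => hc.inj h)]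
  have hval : ∀ k : ZMod ℓ,
      -(Mmat G f t g (((Equiv.addRight (1 : ZMod ℓ)).viaEmbedding ⟨f, hc.inj⟩) (f k)) (f k))
        = (if k = 0 then t else 1) := by
    intro k
    have happ : ((Equiv.addRight (1 : ZMod ℓ)).viaEmbedding ⟨f, hc.inj⟩) (f k) = f (k + 1) := by
      have := Equiv.Perm.viaEmbedding_apply (Equiv.addRight (1 : ZMod ℓ)) ⟨f, hc.inj⟩ k
      simpa using this
    rw [happ]
    by_cases hk : k = 0
    · subst hk
      rw [if_pos rfl, zero_add, Mmat_e10 hc, neg_neg]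
    · rw [if_neg hk, Mmat_bwd hc k hk, neg_neg]
  rw [Finset.prod_congr rfl (fun k _ => hval k),
    Finset.prod_ite_eq' Finset.univ (0 : ZMod ℓ) (fun _ => t), if_pos (Finset.mem_univ _)]

lemma Aval_cdown (hc : Ctx n ℓ G f) (hev : Even ℓ) :
    Aval G f t g (cdown f hc.inj) = t := by
  unfold Aval cdown
  rw [supp_viaEmbedding hc.inj _ (fun k => addRight_negone_ne k hc.one)]
  rw [Finset.prod_image (fun a _ b _ h => hc.inj h)]
  have hval : ∀ k : ZMod ℓ,
      -(Mmat G f t g (((Equiv.addRight (-1 : ZMod ℓ)).viaEmbedding ⟨f, hc.inj⟩) (f k)) (f k))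
        = (if k = 1 then -t else -1) := by
    intro k
    have happ : ((Equiv.addRight (-1 : ZMod ℓ)).viaEmbedding ⟨f, hc.inj⟩) (f k) = f (k + -1) := by
      have := Equiv.Perm.viaEmbedding_apply (Equiv.addRight (-1 : ZMod ℓ)) ⟨f, hc.inj⟩ k
      simpa using this
    rw [happ]
    by_cases hk : k = 1
    · subst hk
      rw [if_pos rfl, show (1 : ZMod ℓ) + -1 = 0 by ring, Mmat_e01]
    · rw [if_neg hk]
      have hm : (k + -1 : ZMod ℓ) ≠ 0 := fun h => hk (by linear_combination h)
      have hfwd := Mmat_fwd (t := t) (g := g) hc (k + -1) hm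
      rw [show (k + -1 + 1 : ZMod ℓ) = k by ring] at hfwd
      rw [hfwd]
  rw [Finset.prod_congr rfl (fun k _ => hval k)]
  rw [← Finset.mul_prod_erase Finset.univ _ (Finset.mem_univ (1 : ZMod ℓ)), if_pos rfl]
  have hrest : ∏ k ∈ Finset.univ.erase (1 : ZMod ℓ), (if k = 1 then -t else (-1 : ℝ))
      = (-1 : ℝ) ^ (ℓ - 1) := by
    rw [Finset.prod_congr rfl (fun k hk => if_neg (Finset.mem_erase.mp hk).1),
      Finset.prod_const, Finset.card_erase_of_mem (Finset.mem_univ _), Finset.card_univ, ZMod.card]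
  have hl1 : 1 ≤ ℓ := Nat.one_le_iff_ne_zero.mpr (NeZero.ne ℓ)
  rw [hrest, Odd.neg_one_pow (Nat.Even.sub_odd hl1 hev odd_one)]
  ring

lemma sum_flip (hc : Ctx n ℓ G f) {π : Equiv.Perm (Fin n)} {p q : Fin n} (hpq : p < q)
    (hadjpq : G.Adj p q) (hEp : ¬ Ep f p q) (hCp : ¬ Cp f p q)
    (huse : (π q = p ∧ π p ≠ q) ∨ (π p = q ∧ π q ≠ p)) (t : ℝ) :
    ∑ g : Fin n → Fin n → Bool, Aval G f t g π = 0 := by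
  have hkey : ∀ g, Aval G f t (flipF p q g) π = - Aval G f t g π := by
    intro g
    rcases huse with ⟨h1, h2⟩ | ⟨h1, h2⟩
    · have hqmem : q ∈ π.support := Equiv.Perm.mem_support.mpr (by rw [h1]; exact hpq.ne)
      unfold Aval
      rw [← Finset.mul_prod_erase _ _ hqmem,
        ← Finset.mul_prod_erase _ (fun i => -(Mmat G f t g (π i) i)) hqmem]
      have h3 : Mmat G f t (flipF p q g) (π q) q = - Mmat G f t g (π q) q := by
        rw [h1]; exact Mmat_flip_at hc hpq hadjpq hEp hCp
      have h4 : ∀ i ∈ π.support.erase q,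
          Mmat G f t (flipF p q g) (π i) i = Mmat G f t g (π i) i := by
        intro i hi
        obtain ⟨hiq, -⟩ := Finset.mem_erase.mp hi
        apply Mmat_flip_indep
        · rintro ⟨-, hb⟩; exact hiq hb
        · rintro ⟨ha, hb⟩; exact h2 (ha ▸ hb)
      rw [h3, Finset.prod_congr rfl (fun i hi => by rw [h4 i hi])]
      ring
    · have hpmem : p ∈ π.support := Equiv.Perm.mem_support.mpr (by rw [h1]; exact hpq.ne')
      unfold Aval
      rw [← Finset.mul_prod_erase _ _ hpmem,
        ← Finset.mul_prod_erase _ (fun i => -(Mmat G f t g (π i) i)) hpmem]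
      have h3 : Mmat G f t (flipF p q g) (π p) p = - Mmat G f t g (π p) p := by
        rw [h1]; exact Mmat_flip_at' hc hpq hadjpq hEp hCp
      have h4 : ∀ i ∈ π.support.erase p,
          Mmat G f t (flipF p q g) (π i) i = Mmat G f t g (π i) i := by
        intro i hi
        obtain ⟨hip, -⟩ := Finset.mem_erase.mp hi
        apply Mmat_flip_indep
        · rintro ⟨ha, hb⟩; exact h2 (by rw [← hb]; exact ha)
        · rintro ⟨ha, -⟩; exact hip ha
      rw [h3, Finset.prod_congr rfl (fun i hi => by rw [h4 i hi])]
      ring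
  have hsum := Equiv.sum_comp (Function.Involutive.toPerm _ (flipF_invol p q))
    (fun g => Aval G f t g π)
  simp only [Function.Involutive.coe_toPerm] at hsum
  rw [Finset.sum_congr rfl (fun g _ => hkey g)] at hsum
  rw [Finset.sum_neg_distrib] at hsum
  linarith [hsum]

end Perms

lemma struct [NeZero ℓ] (hc : Ctx n ℓ G f) (π : Equiv.Perm (Fin n))
    (hA : ∀ x, π x ≠ x → G.Adj (π x) x)
    (h1 : π (f 1) = f 0) (h0 : π (f 0) ≠ f 1)
    (hfr : ∀ a b, G.Adj a b → ¬ Ep f a b → ¬ Cp f a b → π b = a → π a = b) :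
    ∀ k, π (f (k + 1)) = f k := by
  have step : ∀ b : ZMod ℓ, π (f (b + 1)) = f b → π (f b) ≠ f (b + 1) → π (f b) = f (b - 1) := by
    intro b hprev hnot
    have hne : π (f b) ≠ f b := by
      intro h
      have h2 : f (b + 1) = f b := π.injective (by rw [hprev, h])
      have h3 := hc.inj h2
      exact hc.one (by linear_combination h3)
    have hadjx := hA (f b) hne
    by_cases hcp : Cp f (π (f b)) (f b)
    · rcases hcp with ⟨m, hm1, hm2⟩ | ⟨m, hm1, hm2⟩
      · have hbm : b = m + 1 := hc.inj hm2
        rw [hm1]; congr 1; rw [hbm]; ring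
      · have hbm : b = m := hc.inj hm1
        exact absurd (by rw [hm2, hbm]) hnot
    · by_cases hep : Ep f (π (f b)) (f b)
      · rcases hep with ⟨he1, he2⟩ | ⟨he1, he2⟩
        · have hb1 : b = 1 := hc.inj he2
          rw [he1]; congr 1; rw [hb1]; ring
        · have hb0 : b = 0 := hc.inj he2
          refine absurd ?_ hnot
          rw [he1, hb0, zero_add]
      · have h2c := hfr (π (f b)) (f b) hadjx hep hcp rfl
        refine absurd (π.injective ?_) hnot
        rw [h2c, hprev]
  have main : ∀ j : ℕ, π (f (1 - (j : ZMod ℓ))) = f (-(j : ZMod ℓ)) ∧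
      π (f (-(j : ZMod ℓ))) = f (-(j : ZMod ℓ) - 1) := by
    intro j
    induction j with
    | zero =>
      constructor
      · simpa using h1
      · have := step 0 (by simpa using h1) (by simpa using h0)
        simpa using this
    | succ j ih =>
      have e1 : (1 : ZMod ℓ) - ((j : ℕ) + 1 : ℕ) = -(j : ZMod ℓ) := by push_cast; ring
      have e2 : (-((j : ℕ) + 1 : ℕ) : ZMod ℓ) = -(j : ZMod ℓ) - 1 := by push_cast; ring
      constructor
      · rw [e1, e2]; exact ih.2
      · rw [e2]
        have hprev : π (f ((-(j : ZMod ℓ) - 1) + 1)) = f (-(j : ZMod ℓ) - 1) := by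
          rw [show (-(j : ZMod ℓ) - 1) + 1 = -(j : ZMod ℓ) by ring]
          exact ih.2
        have hnot : π (f (-(j : ZMod ℓ) - 1)) ≠ f ((-(j : ZMod ℓ) - 1) + 1) := by
          intro hcon
          rw [show (-(j : ZMod ℓ) - 1) + 1 = -(j : ZMod ℓ) by ring] at hcon
          have heq : f (-(j : ZMod ℓ) - 1) = f (1 - (j : ZMod ℓ)) := π.injective (by rw [hcon, ih.1])
          have h3 := hc.inj heq
          exact hc.two (by linear_combination -h3)
        exact step (-(j : ZMod ℓ) - 1) hprev hnot
  intro k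
  obtain ⟨j, hj⟩ : ∃ j : ℕ, (j : ZMod ℓ) = -k := ⟨(-k).val, ZMod.natCast_rightInverse (-k)⟩
  have hm := (main j).1
  rw [hj] at hm
  rw [show (1 : ZMod ℓ) - -k = k + 1 by ring, neg_neg] at hm
  exact hm

lemma Ctx_rev (hc : Ctx n ℓ G f) : Ctx n ℓ G (fun k => f (1 - k)) where
  inj := fun a b h => by
    have h2 : (1 : ZMod ℓ) - a = 1 - b := hc.inj h
    linear_combination -h2
  adj := fun i => by
    have e1 : (1 : ZMod ℓ) - i = -i + 1 := by ring
    have e2 : (1 : ZMod ℓ) - (i + 1) = -i := by ring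
    show G.Adj (f (1 - i)) (f (1 - (i + 1)))
    rw [e1, e2]
    exact (hc.adj (-i)).symm
  one := hc.one
  two := hc.two

lemma Ep_rev {a b : Fin n} : Ep (fun k => f (1 - k)) a b ↔ Ep f a b := by
  simp only [Ep, sub_zero, sub_self]
  exact or_comm

lemma Cp_rev {a b : Fin n} : Cp (fun k => f (1 - k)) a b ↔ Cp f a b := by
  simp only [Cp]
  constructor
  · rintro (⟨k, ha, hb⟩ | ⟨k, ha, hb⟩)
    · exact Or.inr ⟨-k, by rw [hb]; congr 1; ring, by rw [ha]; congr 1; ring⟩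
    · exact Or.inl ⟨-k, by rw [hb]; congr 1; ring, by rw [ha]; congr 1; ring⟩
  · rintro (⟨k, ha, hb⟩ | ⟨k, ha, hb⟩)
    · exact Or.inr ⟨-k, by rw [hb]; congr 1; ring, by rw [ha]; congr 1; ring⟩
    · exact Or.inl ⟨-k, by rw [hb]; congr 1; ring, by rw [ha]; congr 1; ring⟩

lemma Dzero [NeZero ℓ] (hc : Ctx n ℓ G f) {π : Equiv.Perm (Fin n)}
    (hs : π.support.card = ℓ) (hup : π ≠ cup f hc.inj) (hdn : π ≠ cdown f hc.inj) :
    ∑ g : Fin n → Fin n → Bool, (Aval G f 1 g π - Aval G f (-1) g π) = 0 := by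
  by_cases hA : ∀ x, π x ≠ x → G.Adj (π x) x
  swap
  · push_neg at hA
    obtain ⟨x, hx1, hx2⟩ := hA
    have hz : ∀ t : ℝ, ∀ g : Fin n → Fin n → Bool, Aval G f t g π = 0 := by
      intro t g
      refine Finset.prod_eq_zero (Equiv.Perm.mem_support.mpr hx1) ?_
      rw [Mmat_zero hc hx2, neg_zero]
    exact Finset.sum_eq_zero fun g _ => by rw [hz 1 g, hz (-1) g, sub_self]
  have hsub : (¬ ∀ a b, G.Adj a b → ¬ Ep f a b → ¬ Cp f a b → π b = a → π a = b) →
      ∑ g : Fin n → Fin n → Bool, (Aval G f 1 g π - Aval G f (-1) g π) = 0 := by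
    intro hfr
    push_neg at hfr
    obtain ⟨a, b, hab, hEp, hCp, hba, hnab⟩ := hfr
    rw [Finset.sum_sub_distrib]
    rcases lt_or_gt_of_ne hab.ne with hlt | hgt
    · rw [sum_flip hc hlt hab hEp hCp (Or.inl ⟨hba, hnab⟩) 1,
        sum_flip hc hlt hab hEp hCp (Or.inl ⟨hba, hnab⟩) (-1), sub_self]
    · rw [sum_flip hc hgt hab.symm (fun h => hEp (Ep_symm h)) (fun h => hCp (Cp_symm h))
        (Or.inr ⟨hba, hnab⟩) 1,
        sum_flip hc hgt hab.symm (fun h => hEp (Ep_symm h)) (fun h => hCp (Cp_symm h))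
        (Or.inr ⟨hba, hnab⟩) (-1), sub_self]
  have hf01 : f 0 ≠ f 1 := by simpa using (hc.adj 0).ne
  by_cases h1 : π (f 1) = f 0
  · by_cases h0 : π (f 0) = f 1
    · -- both used
      refine Finset.sum_eq_zero fun g _ => ?_
      have m1 : f 1 ∈ π.support := Equiv.Perm.mem_support.mpr (by rw [h1]; exact hf01)
      have m0 : f 0 ∈ π.support.erase (f 1) :=
        Finset.mem_erase.mpr ⟨hf01, Equiv.Perm.mem_support.mpr (by rw [h0]; exact hf01.symm)⟩
      have key : ∀ t : ℝ, Aval G f t g π =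
          (-(Mmat G f t g (π (f 1)) (f 1))) * ((-(Mmat G f t g (π (f 0)) (f 0))) *
            ∏ i ∈ (π.support.erase (f 1)).erase (f 0), (-(Mmat G f t g (π i) i))) := by
        intro t
        unfold Aval
        rw [← Finset.mul_prod_erase _ _ m1, ← Finset.mul_prod_erase _ _ m0]
      rw [key 1, key (-1), h1, h0, Mmat_e01, Mmat_e01, Mmat_e10 hc, Mmat_e10 hc]
      have hrest : ∏ i ∈ (π.support.erase (f 1)).erase (f 0), (-(Mmat G f 1 g (π i) i))
          = ∏ i ∈ (π.support.erase (f 1)).erase (f 0), (-(Mmat G f (-1) g (π i) i)) := by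
        refine Finset.prod_congr rfl fun i hi => ?_
        obtain ⟨hi0, rest⟩ := Finset.mem_erase.mp hi
        obtain ⟨hi1, -⟩ := Finset.mem_erase.mp rest
        rw [Mmat_t_indep (t' := (-1 : ℝ)) (fun h => hi1 h.2) (fun h => hi0 h.2)]
      rw [hrest]; ring
    · -- only π (f 1) = f 0 : cdown or flip
      by_cases hfr : ∀ a b, G.Adj a b → ¬ Ep f a b → ¬ Cp f a b → π b = a → π a = b
      · exfalso
        apply hdn
        apply perm_eq_viaEmbedding hc.inj _ (fun k => addRight_negone_ne k hc.one) π hs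
        intro k
        have hch := struct hc π hA h1 h0 hfr (k + -1)
        rw [show (k + -1 + 1 : ZMod ℓ) = k by ring] at hch
        simp only [Equiv.coe_addRight]
        exact hch
      · exact hsub hfr
  · by_cases h0 : π (f 0) = f 1
    · -- only π (f 0) = f 1 : cup or flip
      by_cases hfr : ∀ a b, G.Adj a b → ¬ Ep f a b → ¬ Cp f a b → π b = a → π a = b
      · exfalso
        apply hup
        apply perm_eq_viaEmbedding hc.inj _ (fun k => addRight_one_ne k hc.one) π hs
        intro k
        have hc' := Ctx_rev hc
        have h1' : π ((fun k => f (1 - k)) 1) = (fun k => f (1 - k)) 0 := by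
          simp only [sub_self, sub_zero]
          exact h0
        have h0' : π ((fun k => f (1 - k)) 0) ≠ (fun k => f (1 - k)) 1 := by
          simp only [sub_self, sub_zero]
          exact h1
        have hfr' : ∀ a b, G.Adj a b → ¬ Ep (fun k => f (1 - k)) a b →
            ¬ Cp (fun k => f (1 - k)) a b → π b = a → π a = b := by
          intro a b hab hEp' hCp' hba
          exact hfr a b hab (fun h => hEp' (Ep_rev.mpr h)) (fun h => hCp' (Cp_rev.mpr h)) hba
        have hch := struct hc' π hA h1' h0' hfr' (-k)
        have e1 : (1 : ZMod ℓ) - (-k + 1) = k := by ring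
        have e2 : (1 : ZMod ℓ) - (-k) = k + 1 := by ring
        simp only [e1, e2] at hch
        simp only [Equiv.coe_addRight]
        exact hch
      · exact hsub hfr
    · -- neither
      refine Finset.sum_eq_zero fun g _ => ?_
      have hpe : Aval G f 1 g π = Aval G f (-1) g π := by
        refine Finset.prod_congr rfl fun i hi => ?_
        rw [Mmat_t_indep (t' := (-1 : ℝ)) ?ha ?hb]
        case ha => rintro ⟨ha, hb⟩; rw [hb] at ha; exact h1 ha
        case hb => rintro ⟨ha, hb⟩; rw [hb] at ha; exact h0 ha
      rw [hpe, sub_self]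

lemma isOrientation (hc : Ctx n ℓ G f) (t : ℝ) (ht : t = 1 ∨ t = -1)
    (g : Fin n → Fin n → Bool) : IsOrientationMatrix G (Mmat G f t g) := by
  constructor
  · intro r c hadj
    by_cases h1 : r = f 0 ∧ c = f 1
    · obtain ⟨rfl, rfl⟩ := h1
      rw [Mmat_e01, Mmat_e10 hc]
      rcases ht with rfl | rfl <;> norm_num
    · by_cases h2 : r = f 1 ∧ c = f 0
      · obtain ⟨rfl, rfl⟩ := h2
        rw [Mmat_e01, Mmat_e10 hc]
        rcases ht with rfl | rfl <;> norm_num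
      · by_cases h3 : ∃ k, r = f k ∧ c = f (k + 1)
        · obtain ⟨k, rfl, rfl⟩ := h3
          have hk : k ≠ 0 := by rintro rfl; exact h1 ⟨rfl, by rw [zero_add]⟩
          rw [Mmat_fwd hc _ hk, Mmat_bwd hc _ hk]
          norm_num
        · by_cases h4 : ∃ k, c = f k ∧ r = f (k + 1)
          · obtain ⟨k, rfl, rfl⟩ := h4
            have hk : k ≠ 0 := by rintro rfl; exact h2 ⟨by rw [zero_add], rfl⟩
            rw [Mmat_fwd hc _ hk, Mmat_bwd hc _ hk]
            norm_num
          · have hEp : ¬ Ep f r c := by rintro (h | h); exacts [h1 h, h2 h]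
            have hCp : ¬ Cp f r c := by rintro (h | h); exacts [h3 h, h4 h]
            rw [Mmat_free hc hadj hEp hCp,
              Mmat_free hc hadj.symm (fun h => hEp (Ep_symm h)) (fun h => hCp (Cp_symm h))]
            rcases lt_trichotomy r c with hlt | heq | hgt
            · rw [if_pos hlt, if_neg (asymm hlt)]
              cases hb : g r c <;> simp [bval]
            · exact absurd heq hadj.ne
            · rw [if_neg (asymm hgt), if_pos hgt]
              cases hb : g c r <;> simp [bval]
  · intro r c h
    exact Mmat_zero hc h

lemma support_getElem_eq {V : Type*} {G : SimpleGraph V} {u v : V} (w : G.Walk u v) (m : ℕ)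
    (hm : m < w.support.length) : w.support[m] = w.getVert m := by
  induction w generalizing m with
  | nil =>
    simp only [SimpleGraph.Walk.support_nil, List.length_singleton] at hm
    interval_cases m
    simp [SimpleGraph.Walk.getVert_zero]
  | cons h p ih =>
    cases m with
    | zero => simp [SimpleGraph.Walk.support_cons, SimpleGraph.Walk.getVert_zero]
    | succ m =>
      simp only [SimpleGraph.Walk.support_cons, List.getElem_cons_succ,
        SimpleGraph.Walk.getVert_cons_succ]
      have hm' : m < p.support.length := by
        simp only [SimpleGraph.Walk.support_cons, List.length_cons] at hm
        omega
      exact ih m hm'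

lemma ctx_of_cycle {m : ℕ} {H : SimpleGraph (Fin m)} {u : Fin m} (w : H.Walk u u)
    (hcyc : w.IsCycle) :
    Ctx m w.length H (fun k => w.getVert (if k.val = 0 then w.length else k.val)) := by
  have hl3 : 3 ≤ w.length := hcyc.three_le_length
  haveI : NeZero w.length := ⟨by omega⟩
  have hinj : ∀ i j : ℕ, 1 ≤ i → i ≤ w.length → 1 ≤ j → j ≤ w.length →
      w.getVert i = w.getVert j → i = j := by
    intro i j hi1 hi2 hj1 hj2 hgv
    have hlen : w.support.length = w.length + 1 := SimpleGraph.Walk.length_support w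
    have hti : i - 1 < w.support.tail.length := by rw [List.length_tail, hlen]; omega
    have htj : j - 1 < w.support.tail.length := by rw [List.length_tail, hlen]; omega
    have hgi : w.support.tail[i - 1] = w.getVert i := by
      rw [List.getElem_tail, support_getElem_eq]
      congr 1
      omega
    have hgj : w.support.tail[j - 1] = w.getVert j := by
      rw [List.getElem_tail, support_getElem_eq]
      congr 1
      omega
    have heq : w.support.tail[i - 1] = w.support.tail[j - 1] := by rw [hgi, hgj, hgv]
    have := (List.Nodup.getElem_inj_iff hcyc.support_nodup (hi := hti) (hj := htj)).mp heq
    omega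
  have hne1 : (1 : ZMod w.length) ≠ 0 := by
    intro h
    have h2 : ((1 : ℕ) : ZMod w.length) = 0 := by exact_mod_cast h
    have := (ZMod.natCast_eq_zero_iff 1 w.length).mp h2
    have := Nat.le_of_dvd (by omega) this
    omega
  have hne2 : (2 : ZMod w.length) ≠ 0 := by
    intro h
    have h2 : ((2 : ℕ) : ZMod w.length) = 0 := by exact_mod_cast h
    have := (ZMod.natCast_eq_zero_iff 2 w.length).mp h2
    have := Nat.le_of_dvd (by omega) this
    omega
  have hidx : ∀ k : ZMod w.length,
      1 ≤ (if k.val = 0 then w.length else k.val) ∧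
        (if k.val = 0 then w.length else k.val) ≤ w.length := by
    intro k
    have := ZMod.val_lt k
    split_ifs <;> omega
  refine ⟨?_, ?_, hne1, hne2⟩
  · intro a b hab
    have hab' : w.getVert (if a.val = 0 then w.length else a.val)
        = w.getVert (if b.val = 0 then w.length else b.val) := hab
    have := hinj _ _ (hidx a).1 (hidx a).2 (hidx b).1 (hidx b).2 hab'
    have hva := ZMod.val_lt a
    have hvb := ZMod.val_lt b
    have hval : a.val = b.val := by
      by_cases ha0 : a.val = 0 <;> by_cases hb0 : b.val = 0 <;>
        simp only [ha0, hb0, if_true, if_false, if_pos, if_neg] at this <;> omega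
    exact ZMod.val_injective w.length hval
  · intro k
    show H.Adj (w.getVert (if k.val = 0 then w.length else k.val))
      (w.getVert (if (k + 1).val = 0 then w.length else (k + 1).val))
    have hkl : k.val < w.length := ZMod.val_lt k
    have hadd : (k + 1).val = (k.val + 1) % w.length := by
      rw [ZMod.val_add, ZMod.val_one_eq_one_mod]
      rw [Nat.mod_eq_of_lt (show 1 < w.length by omega)]
    by_cases hk0 : k.val = 0
    · have h1v : (k + 1).val = 1 := by rw [hadd, hk0, Nat.mod_eq_of_lt (by omega)]
      rw [if_pos hk0, h1v, if_neg (by omega)]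
      have h01 := w.adj_getVert_succ (show 0 < w.length by omega)
      rw [SimpleGraph.Walk.getVert_zero] at h01
      rw [SimpleGraph.Walk.getVert_length]
      exact h01
    · rw [if_neg hk0]
      by_cases hke : k.val = w.length - 1
      · have h0v : (k + 1).val = 0 := by
          rw [hadd, hke, Nat.sub_add_cancel (by omega), Nat.mod_self]
        rw [h0v, if_pos rfl]
        have := w.adj_getVert_succ (show k.val < w.length by omega)
        rw [show k.val + 1 = w.length by omega] at this
        exact this
      · have hv : (k + 1).val = k.val + 1 := by rw [hadd, Nat.mod_eq_of_lt (by omega)]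
        rw [hv, if_neg (by omega)]
        exact w.adj_getVert_succ hkl

end Stmt15

open Stmt15

/- Statement 15: if a finite simple graph G contains a cycle of even length, then there are
two orientations of G whose skew-adjacency matrices have different characteristic
polynomials. -/
theorem stmt_15 (n : ℕ) (G : SimpleGraph (Fin n))
    (heven : ∃ (u : Fin n) (w : G.Walk u u), w.IsCycle ∧ Even w.length) :
    ∃ S₁ S₂ : Matrix (Fin n) (Fin n) ℝ,
      IsOrientationMatrix G S₁ ∧ IsOrientationMatrix G S₂ ∧
        S₁.charpoly ≠ S₂.charpoly := by
  classical
  obtain ⟨u, w, hcyc, hev⟩ := heven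
  have hl3 : 3 ≤ w.length := hcyc.three_le_length
  haveI : NeZero w.length := ⟨by omega⟩
  set ℓ := w.length with hL
  set f : ZMod ℓ → Fin n := fun k => w.getVert (if k.val = 0 then ℓ else k.val) with hf
  have hc : Ctx n ℓ G f := ctx_of_cycle w hcyc
  have hev' : Even ℓ := hev
  have hln : ℓ ≤ n := by
    have := Fintype.card_le_of_injective f hc.inj
    rwa [ZMod.card, Fintype.card_fin] at this
  have key : ∃ g : Fin n → Fin n → Bool,
      (Mmat G f 1 g).charpoly ≠ (Mmat G f (-1) g).charpoly := by
    by_contra hall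
    push_neg at hall
    set cu := cup f hc.inj with hcu
    set cd := cdown f hc.inj with hcd
    have hco : ∀ (t : ℝ) (g : Fin n → Fin n → Bool),
        (Mmat G f t g).charpoly.coeff (n - ℓ)
          = ∑ π : Equiv.Perm (Fin n), (if π.support.card = ℓ then
              Equiv.Perm.sign π • Aval G f t g π else 0) :=
      fun t g => charpoly_coeff (Mmat G f t g) (fun i => Mmat_diag hc i) hln (by omega)
    have hterm : ∀ π : Equiv.Perm (Fin n),
        (∑ g : Fin n → Fin n → Bool,
          ((if π.support.card = ℓ then Equiv.Perm.sign π • Aval G f 1 g π else 0)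
            - (if π.support.card = ℓ then Equiv.Perm.sign π • Aval G f (-1) g π else 0)))
          = (if π.support.card = ℓ then
              Equiv.Perm.sign π • (∑ g : Fin n → Fin n → Bool,
                (Aval G f 1 g π - Aval G f (-1) g π)) else 0) := by
      intro π
      by_cases hπ : π.support.card = ℓ
      · simp only [if_pos hπ]
        rw [Finset.sum_congr rfl (fun g _ => (smul_sub (Equiv.Perm.sign π)
          (Aval G f 1 g π) (Aval G f (-1) g π)).symm), ← Finset.smul_sum]
      · simp only [if_neg hπ, sub_self, Finset.sum_const_zero]
    have hzero : (0 : ℝ) = ∑ π : Equiv.Perm (Fin n), (if π.support.card = ℓ then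
        Equiv.Perm.sign π • (∑ g : Fin n → Fin n → Bool,
          (Aval G f 1 g π - Aval G f (-1) g π)) else 0) := by
      calc (0 : ℝ) = ∑ g : Fin n → Fin n → Bool,
          ((Mmat G f 1 g).charpoly.coeff (n - ℓ) - (Mmat G f (-1) g).charpoly.coeff (n - ℓ)) := by
            symm
            refine Finset.sum_eq_zero fun g _ => ?_
            rw [hall g, sub_self]
        _ = ∑ g : Fin n → Fin n → Bool, ∑ π : Equiv.Perm (Fin n),
            ((if π.support.card = ℓ then Equiv.Perm.sign π • Aval G f 1 g π else 0)
              - (if π.support.card = ℓ then Equiv.Perm.sign π • Aval G f (-1) g π else 0)) := by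
            refine Finset.sum_congr rfl fun g _ => ?_
            rw [hco 1 g, hco (-1) g, ← Finset.sum_sub_distrib]
        _ = ∑ π : Equiv.Perm (Fin n), ∑ g : Fin n → Fin n → Bool,
            ((if π.support.card = ℓ then Equiv.Perm.sign π • Aval G f 1 g π else 0)
              - (if π.support.card = ℓ then Equiv.Perm.sign π • Aval G f (-1) g π else 0)) :=
            Finset.sum_comm
        _ = ∑ π : Equiv.Perm (Fin n), (if π.support.card = ℓ then
            Equiv.Perm.sign π • (∑ g : Fin n → Fin n → Bool,
              (Aval G f 1 g π - Aval G f (-1) g π)) else 0) :=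
            Finset.sum_congr rfl fun π _ => hterm π
    have hcu_card : cu.support.card = ℓ :=
      card_supp_viaEmbedding hc.inj _ (fun k => addRight_one_ne k hc.one)
    have hcd_card : cd.support.card = ℓ :=
      card_supp_viaEmbedding hc.inj _ (fun k => addRight_negone_ne k hc.one)
    have hcuapp : ∀ k : ZMod ℓ, cu (f k) = f (k + 1) := by
      intro k
      have := Equiv.Perm.viaEmbedding_apply (Equiv.addRight (1 : ZMod ℓ)) ⟨f, hc.inj⟩ k
      simpa [hcu, cup] using this
    have hcdapp : ∀ k : ZMod ℓ, cd (f k) = f (k + -1) := by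
      intro k
      have := Equiv.Perm.viaEmbedding_apply (Equiv.addRight (-1 : ZMod ℓ)) ⟨f, hc.inj⟩ k
      simpa [hcd, cdown] using this
    have hcucd : cu ≠ cd := by
      intro h
      have h1 : cu (f 0) = f 1 := by rw [hcuapp 0, zero_add]
      have h2 : cd (f 0) = f (-1) := by rw [hcdapp 0, zero_add]
      rw [h] at h1
      have h3 := hc.inj (h1.symm.trans h2)
      exact hc.two (by linear_combination h3)
    have hvanish : ∀ π ∈ (Finset.univ : Finset (Equiv.Perm (Fin n))),
        π ∉ ({cu, cd} : Finset (Equiv.Perm (Fin n))) →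
        (if π.support.card = ℓ then Equiv.Perm.sign π •
          (∑ g : Fin n → Fin n → Bool, (Aval G f 1 g π - Aval G f (-1) g π)) else 0) = 0 := by
      intro π _ hπ
      simp only [Finset.mem_insert, Finset.mem_singleton] at hπ
      push_neg at hπ
      by_cases hcard : π.support.card = ℓ
      · rw [if_pos hcard, Dzero hc hcard hπ.1 hπ.2, smul_zero]
      · rw [if_neg hcard]
    rw [← Finset.sum_subset (Finset.subset_univ ({cu, cd} : Finset (Equiv.Perm (Fin n))))
      hvanish] at hzero
    rw [Finset.sum_pair hcucd, if_pos hcu_card, if_pos hcd_card] at hzero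
    have hDcu : (∑ g : Fin n → Fin n → Bool, (Aval G f 1 g cu - Aval G f (-1) g cu))
        = 2 * (Fintype.card (Fin n → Fin n → Bool) : ℝ) := by
      rw [Finset.sum_congr rfl (fun g _ => by
        rw [Aval_cup (t := (1:ℝ)) hc hev', Aval_cup (t := (-1:ℝ)) hc hev']; norm_num :
          ∀ g ∈ (Finset.univ : Finset (Fin n → Fin n → Bool)),
            (Aval G f 1 g cu - Aval G f (-1) g cu) = (2 : ℝ))]
      rw [Finset.sum_const, nsmul_eq_mul, Finset.card_univ]
      ring
    have hDcd : (∑ g : Fin n → Fin n → Bool, (Aval G f 1 g cd - Aval G f (-1) g cd))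
        = 2 * (Fintype.card (Fin n → Fin n → Bool) : ℝ) := by
      rw [Finset.sum_congr rfl (fun g _ => by
        rw [Aval_cdown (t := (1:ℝ)) hc hev', Aval_cdown (t := (-1:ℝ)) hc hev']; norm_num :
          ∀ g ∈ (Finset.univ : Finset (Fin n → Fin n → Bool)),
            (Aval G f 1 g cd - Aval G f (-1) g cd) = (2 : ℝ))]
      rw [Finset.sum_const, nsmul_eq_mul, Finset.card_univ]
      ring
    rw [hDcu, hDcd] at hzero
    have hinv : cu * cd = 1 := by
      apply Equiv.ext
      intro x
      rw [Equiv.Perm.mul_apply, Equiv.Perm.one_apply]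
      by_cases hx : x ∈ Set.range f
      · obtain ⟨k, rfl⟩ := hx
        rw [hcdapp k, hcuapp (k + -1)]
        congr 1
        ring
      · rw [hcd, hcu]
        unfold cup cdown
        rw [Equiv.Perm.viaEmbedding_apply_of_notMem _ _ x hx,
          Equiv.Perm.viaEmbedding_apply_of_notMem _ _ x hx]
    have hsign : Equiv.Perm.sign cd = Equiv.Perm.sign cu := by
      rw [eq_inv_of_mul_eq_one_right hinv, Equiv.Perm.sign_inv]
    rw [hsign] at hzero
    have hcardpos : (0 : ℝ) < (Fintype.card (Fin n → Fin n → Bool) : ℝ) := by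
      exact_mod_cast Fintype.card_pos
    rcases Int.units_eq_one_or (Equiv.Perm.sign cu) with hsgn | hsgn <;> rw [hsgn] at hzero
    · simp only [one_smul] at hzero
      linarith
    · simp only [Units.smul_def, Units.val_neg, Units.val_one, neg_smul, one_smul,
        zsmul_eq_mul, Int.cast_neg, Int.cast_one, neg_mul, one_mul] at hzero
      linarith
  obtain ⟨g, hg⟩ := key
  exact ⟨Mmat G f 1 g, Mmat G f (-1) g, isOrientation hc 1 (Or.inl rfl) g,
    isOrientation hc (-1) (Or.inr rfl) g, hg⟩
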